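/- Let H₁, H₂, H₃ be real Hilbert spaces, ε > 0, and f a C² real-valued function on B_ε(0) × B_ε(0) × B_ε(0) ⊂ H₁ × H₂ × H₃. Assume the partial differential d₃f(x₁, 0, 0) = 0 for all x₁ ∈ B_ε(0) ⊂ H₁, and that the second partial differential d₃²f(0,0,0) : H₃ → H₃ is a bounded invertible linear operator. Then there exist δ ∈ (0, ε) and a C¹ map h : B_δ(0) × B_δ(0) → H₃ with h(0,0) = 0 such that d₃f(x₁, x₂, h(x₁,x₂)) = 0 for all (x₁,x₂) ∈ B_δ(0) × B_δ(0), and the function g(x₁,x₂) := f(x₁, x₂, h(x₁,x₂)) is C² with dg(x₁,x₂) = d_{(1,2)}f(x₁, x₂, h(x₁,x₂)). -/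

import Mathlib

open Metric Topology Filter

set_option maxHeartbeats 1000000 in
theorem stmt15 {H1 H2 H3 : Type*}
    [NormedAddCommGroup H1] [InnerProductSpace ℝ H1] [CompleteSpace H1]
    [NormedAddCommGroup H2] [InnerProductSpace ℝ H2] [CompleteSpace H2]
    [NormedAddCommGroup H3] [InnerProductSpace ℝ H3] [CompleteSpace H3]
    (ε : ℝ) (hε : 0 < ε)
    (f : H1 × H2 × H3 → ℝ)
    (hf : ContDiffOn ℝ 2 f (ball (0 : H1) ε ×ˢ ball (0 : H2) ε ×ˢ ball (0 : H3) ε))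
    (hd3 : ∀ x1 ∈ ball (0 : H1) ε, fderiv ℝ (fun y : H3 => f (x1, 0, y)) 0 = 0)
    (hd33 : ∃ T : H3 ≃L[ℝ] H3,
      (T : H3 →L[ℝ] H3) = fderiv ℝ (fun y => gradient (fun y' : H3 => f (0, 0, y')) y) 0) :
    ∃ δ : ℝ, 0 < δ ∧ δ < ε ∧ ∃ h : H1 × H2 → H3,
      h (0, 0) = 0 ∧
      ContDiffOn ℝ 1 h (ball (0 : H1) δ ×ˢ ball (0 : H2) δ) ∧
      (∀ x ∈ ball (0 : H1) δ ×ˢ ball (0 : H2) δ,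
        fderiv ℝ (fun y : H3 => f (x.1, x.2, y)) (h x) = 0) ∧
      ContDiffOn ℝ 2 (fun x : H1 × H2 => f (x.1, x.2, h x))
        (ball (0 : H1) δ ×ˢ ball (0 : H2) δ) ∧
      (∀ x ∈ ball (0 : H1) δ ×ˢ ball (0 : H2) δ,
        fderiv ℝ (fun x' : H1 × H2 => f (x'.1, x'.2, h x')) x
          = fderiv ℝ (fun x' : H1 × H2 => f (x'.1, x'.2, h x)) x) := by
  classical
  obtain ⟨T, hT⟩ := hd33
  set U : Set (H1 × H2 × H3) := ball (0 : H1) ε ×ˢ ball (0 : H2) ε ×ˢ ball (0 : H3) ε with hUdef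
  have hUopen : IsOpen U := isOpen_ball.prod (isOpen_ball.prod isOpen_ball)
  have hfd : ∀ p ∈ U, DifferentiableAt ℝ f p := fun p hp =>
    (hf.differentiableOn (by norm_num)).differentiableAt (hUopen.mem_nhds hp)
  -- inclusion of third coordinate
  set j : H3 →L[ℝ] H1 × H2 × H3 :=
    (0 : H3 →L[ℝ] H1).prod ((0 : H3 →L[ℝ] H2).prod (ContinuousLinearMap.id ℝ H3)) with hjdef
  have hjapp : ∀ y : H3, j y = (0, 0, y) := fun y => rfl
  -- partial derivative in the third variable
  have lemA : ∀ (x1 : H1) (x2 : H2) (y : H3), (x1, x2, y) ∈ U →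
      HasFDerivAt (fun y' : H3 => f (x1, x2, y')) ((fderiv ℝ f (x1, x2, y)).comp j) y := by
    intro x1 x2 y hp
    have h1 : HasFDerivAt (fun y' : H3 => ((x1, x2, y') : H1 × H2 × H3)) j y := by
      have heq : (fun y' : H3 => ((x1, x2, y') : H1 × H2 × H3))
          = fun y' => ((x1, x2, 0) : H1 × H2 × H3) + j y' := by
        funext y'; simp [hjapp, Prod.ext_iff]
      rw [heq]
      exact j.hasFDerivAt.const_add _
    exact (hfd _ hp).hasFDerivAt.comp y h1
  -- the reassociation continuous linear map
  set m : (H1 × H2) × H3 →L[ℝ] H1 × H2 × H3 :=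
    ((ContinuousLinearMap.fst ℝ H1 H2).comp (ContinuousLinearMap.fst ℝ (H1 × H2) H3)).prod
      (((ContinuousLinearMap.snd ℝ H1 H2).comp (ContinuousLinearMap.fst ℝ (H1 × H2) H3)).prod
        (ContinuousLinearMap.snd ℝ (H1 × H2) H3)) with hmdef
  have hmapp : ∀ q : (H1 × H2) × H3, m q = (q.1.1, q.1.2, q.2) := fun q => rfl
  set V : Set ((H1 × H2) × H3) := (ball (0 : H1) ε ×ˢ ball (0 : H2) ε) ×ˢ ball (0 : H3) ε
    with hVdef
  have hVopen : IsOpen V := (isOpen_ball.prod isOpen_ball).prod isOpen_ball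
  have hmV : ∀ q ∈ V, m q ∈ U := by
    intro q hq
    simp only [hVdef, Set.mem_prod] at hq
    simp only [hUdef, Set.mem_prod, hmapp]
    exact ⟨hq.1.1, hq.1.2, hq.2⟩
  have haV : ((((0 : H1), (0 : H2)), (0 : H3)) : (H1 × H2) × H3) ∈ V := by
    simp [hVdef, hε]
  -- the post-composition map P : A ↦ toDual.symm (A ∘ j)
  set tDE : (H3 →L[ℝ] ℝ) ≃L[ℝ] H3 :=
    (InnerProductSpace.toDual ℝ H3).symm.toContinuousLinearEquiv with htDEdef
  have htDEapp : ∀ A : H3 →L[ℝ] ℝ, tDE A = (InnerProductSpace.toDual ℝ H3).symm A :=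
    fun A => rfl
  set P : ((H1 × H2 × H3) →L[ℝ] ℝ) →L[ℝ] H3 :=
    (tDE : (H3 →L[ℝ] ℝ) →L[ℝ] H3).comp
      ((ContinuousLinearMap.compL ℝ H3 (H1 × H2 × H3) ℝ).flip j) with hPdef
  have hPapp : ∀ A : (H1 × H2 × H3) →L[ℝ] ℝ,
      P A = (InnerProductSpace.toDual ℝ H3).symm (A.comp j) := fun A => rfl
  set G : (H1 × H2) × H3 → H3 := fun q => P (fderiv ℝ f (m q)) with hGdef
  have hdf1 : ContDiffOn ℝ 1 (fderiv ℝ f) U := hf.fderiv_of_isOpen hUopen (by norm_num)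
  have hGsm : ContDiffOn ℝ 1 G V := by
    have h1 : ContDiffOn ℝ 1 (⇑P ∘ fderiv ℝ f ∘ ⇑m) V :=
      P.contDiff.comp_contDiffOn (hdf1.comp (m.contDiff.contDiffOn) hmV)
    exact h1.congr (fun q _ => rfl)
  have hGslice : ∀ q ∈ V, G q
      = (InnerProductSpace.toDual ℝ H3).symm
          (fderiv ℝ (fun y : H3 => f (q.1.1, q.1.2, y)) q.2) := by
    intro q hq
    have h1 : G q = (InnerProductSpace.toDual ℝ H3).symm
        ((fderiv ℝ f (q.1.1, q.1.2, q.2)).comp j) :=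
      hPapp (fderiv ℝ f (q.1.1, q.1.2, q.2))
    rw [h1, (lemA q.1.1 q.1.2 q.2 (hmV q hq)).fderiv]
  have hGzero : ∀ x1 ∈ ball (0 : H1) ε, G ((x1, 0), 0) = 0 := by
    intro x1 hx1
    have hq : (((x1, (0 : H2)), (0 : H3)) : (H1 × H2) × H3) ∈ V := by
      simp [hVdef, hx1, hε]
    rw [hGslice _ hq]
    show (InnerProductSpace.toDual ℝ H3).symm (fderiv ℝ (fun y : H3 => f (x1, 0, y)) 0) = 0
    rw [hd3 x1 hx1, map_zero]
  -- derivative of G in the third variable at the origin is T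
  set K3 : H3 →L[ℝ] (H1 × H2) × H3 :=
    (0 : H3 →L[ℝ] H1 × H2).prod (ContinuousLinearMap.id ℝ H3) with hK3def
  set a0 : (H1 × H2) × H3 := (((0 : H1), (0 : H2)), (0 : H3)) with ha0def
  have hGdiff : DifferentiableAt ℝ G a0 :=
    (hGsm.differentiableOn one_ne_zero).differentiableAt (hVopen.mem_nhds haV)
  have hTG : fderiv ℝ (fun y : H3 => G (((0 : H1), (0 : H2)), y)) 0 = (T : H3 →L[ℝ] H3) := by
    rw [hT]
    apply Filter.EventuallyEq.fderiv_eq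
    filter_upwards [ball_mem_nhds (0 : H3) hε] with y hy
    have hq : ((((0 : H1), (0 : H2)), y) : (H1 × H2) × H3) ∈ V := by
      simp [hVdef, hy, hε]
    rw [hGslice _ hq]
    rfl
  set DG : ((H1 × H2) × H3) →L[ℝ] H3 := fderiv ℝ G a0 with hDGdef
  have hDGK3 : DG.comp K3 = (T : H3 →L[ℝ] H3) := by
    rw [← hTG]
    have h1 : HasFDerivAt (fun y : H3 => ((((0 : H1), (0 : H2)), y) : (H1 × H2) × H3)) K3 0 :=
      K3.hasFDerivAt
    exact ((hGdiff.hasFDerivAt.comp 0 h1).fderiv).symm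
  have hDGsplit : ∀ (u : H1 × H2) (v : H3), DG (u, v) = DG (u, 0) + T v := by
    intro u v
    have h1 : ((u, v) : (H1 × H2) × H3) = (u, 0) + ((0 : H1 × H2), v) := by simp
    rw [h1, map_add]
    congr 1
    have h2 := congrArg (fun L : H3 →L[ℝ] H3 => L v) hDGK3
    simpa [hK3def] using h2
  -- the invertible derivative of Φ
  set M : ((H1 × H2) × H3) →L[ℝ] ((H1 × H2) × H3) :=
    (ContinuousLinearMap.fst ℝ (H1 × H2) H3).prod DG with hMdef
  set N : ((H1 × H2) × H3) →L[ℝ] ((H1 × H2) × H3) :=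
    (ContinuousLinearMap.fst ℝ (H1 × H2) H3).prod
      ((T.symm : H3 →L[ℝ] H3).comp
        ((ContinuousLinearMap.snd ℝ (H1 × H2) H3)
          - DG.comp ((ContinuousLinearMap.inl ℝ (H1 × H2) H3).comp
              (ContinuousLinearMap.fst ℝ (H1 × H2) H3)))) with hNdef
  have hMapp : ∀ (u : H1 × H2) (v : H3), M (u, v) = (u, DG (u, v)) := fun u v => rfl
  have hNapp : ∀ (u : H1 × H2) (w : H3), N (u, w) = (u, T.symm (w - DG (u, 0))) :=
    fun u w => rfl
  have hNM : Function.LeftInverse N M := by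
    intro q
    obtain ⟨u, v⟩ := q
    rw [hMapp, hNapp, hDGsplit u v]
    rw [add_sub_cancel_left]
    rw [ContinuousLinearEquiv.symm_apply_apply]
  have hMN : Function.RightInverse N M := by
    intro q
    obtain ⟨u, w⟩ := q
    rw [hNapp, hMapp, hDGsplit u (T.symm (w - DG (u, 0)))]
    rw [ContinuousLinearEquiv.apply_symm_apply, add_sub_cancel]
  set Eqv : ((H1 × H2) × H3) ≃L[ℝ] ((H1 × H2) × H3) :=
    ContinuousLinearEquiv.equivOfInverse M N hNM hMN with hEqvdef
  have hEqvcoe : (Eqv : ((H1 × H2) × H3) →L[ℝ] ((H1 × H2) × H3)) = M := rfl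
  -- Φ and its local inverse
  set Φ : (H1 × H2) × H3 → (H1 × H2) × H3 := fun q => (q.1, G q) with hΦdef
  have hGa0 : G a0 = 0 := hGzero 0 (mem_ball_self hε)
  have hΦa : Φ a0 = a0 := by
    exact (congrArg (Prod.mk a0.1) hGa0).trans rfl
  have hΦsm : ContDiffOn ℝ 1 Φ V := (contDiff_fst.contDiffOn).prodMk hGsm
  have hΦat : ContDiffAt ℝ 1 Φ a0 := hΦsm.contDiffAt (hVopen.mem_nhds haV)
  have hΦ' : HasFDerivAt Φ ((Eqv : ((H1 × H2) × H3) ≃L[ℝ] ((H1 × H2) × H3)) :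
      ((H1 × H2) × H3) →L[ℝ] ((H1 × H2) × H3)) a0 := by
    rw [hEqvcoe, hMdef]
    exact HasFDerivAt.prodMk (hasFDerivAt_fst) hGdiff.hasFDerivAt
  set ψ : (H1 × H2) × H3 → (H1 × H2) × H3 := hΦat.localInverse hΦ' one_ne_zero with hψdef
  have hS : HasStrictFDerivAt Φ ((Eqv : ((H1 × H2) × H3) ≃L[ℝ] ((H1 × H2) × H3)) :
      ((H1 × H2) × H3) →L[ℝ] ((H1 × H2) × H3)) a0 := hΦat.hasStrictFDerivAt' hΦ' one_ne_zero
  have hψS : ψ = hS.localInverse Φ Eqv a0 := rfl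
  have hψa : ψ a0 = a0 := by
    have := hΦat.localInverse_apply_image hΦ' one_ne_zero
    rwa [hΦa] at this
  have hψsmooth : ContDiffAt ℝ 1 ψ a0 := by
    have := hΦat.to_localInverse hΦ' one_ne_zero
    rwa [hΦa] at this
  obtain ⟨u, hu, hψu⟩ := hψsmooth.contDiffOn le_rfl (by simp)
  have hev1 : ∀ᶠ y in 𝓝 a0, Φ (ψ y) = y := by
    have := hS.eventually_right_inverse
    rw [hΦa] at this
    exact this
  have hev2 : ∀ᶠ y in 𝓝 a0, ψ y ∈ V := by
    have hcont : ContinuousAt ψ a0 := hψsmooth.continuousAt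
    exact hcont.eventually_mem (hVopen.mem_nhds (by rw [hψa]; exact haV))
  have hev3 : ∀ᶠ y in 𝓝 a0, y ∈ u := hu
  obtain ⟨r, hr0, hrball⟩ :=
    Metric.eventually_nhds_iff_ball.1 ((hev1.and hev2).and hev3)
  -- choice of δ
  set δ : ℝ := min (r / 2) (ε / 2) with hδdef
  have hδ0 : 0 < δ := lt_min (by linarith) (by linarith)
  have hδε : δ < ε := lt_of_le_of_lt (min_le_right _ _) (by linarith)
  have hδr : δ < r := lt_of_le_of_lt (min_le_left _ _) (by linarith)
  -- the implicit function
  set h : H1 × H2 → H3 := fun x => (ψ (x, 0)).2 with hhdef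
  set W : Set (H1 × H2) := ball (0 : H1 × H2) δ with hWdef
  have hWopen : IsOpen W := isOpen_ball
  have hWball : ball (0 : H1) δ ×ˢ ball (0 : H2) δ = W := by
    rw [hWdef]
    exact ball_prod_same 0 0 δ
  have hmem_r : ∀ x ∈ W, ((x, (0 : H3)) : (H1 × H2) × H3) ∈ ball a0 r := by
    intro x hx
    rw [hWdef, mem_ball] at hx
    rw [mem_ball, ha0def]
    calc dist ((x, (0 : H3)) : (H1 × H2) × H3) (((0 : H1), (0 : H2)), (0 : H3))
        = max (dist x ((0 : H1), (0 : H2))) (dist (0 : H3) 0) := Prod.dist_eq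
      _ ≤ dist x ((0 : H1), (0 : H2)) := by simp
      _ < r := lt_trans hx hδr
  have hψ1 : ∀ x ∈ W, (ψ (x, 0)).1 = x := by
    intro x hx
    have h1 := ((hrball _ (hmem_r x hx)).1).1
    have := congrArg Prod.fst h1
    simpa [hΦdef] using this
  have hψfull : ∀ x ∈ W, ψ (x, 0) = (x, h x) := by
    intro x hx
    exact Prod.ext (hψ1 x hx) rfl
  have hxhV : ∀ x ∈ W, ((x, h x) : (H1 × H2) × H3) ∈ V := by
    intro x hx
    rw [← hψfull x hx]
    exact ((hrball _ (hmem_r x hx)).1).2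
  have hGh : ∀ x ∈ W, G (x, h x) = 0 := by
    intro x hx
    have h1 := ((hrball _ (hmem_r x hx)).1).1
    have := congrArg Prod.snd h1
    rw [hψfull x hx] at h1
    have h2 := congrArg Prod.snd h1
    simpa [hΦdef] using h2
  have hD3zero : ∀ x ∈ W, (fderiv ℝ f (x.1, x.2, h x)).comp j = 0 := by
    intro x hx
    have h1 := hGh x hx
    rw [hGdef] at h1
    have h2 : (InnerProductSpace.toDual ℝ H3).symm
        ((fderiv ℝ f (x.1, x.2, h x)).comp j) = 0 := h1
    have h3 := (InnerProductSpace.toDual ℝ H3).symm.injective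
      (by rw [h2, map_zero] : (InnerProductSpace.toDual ℝ H3).symm
        ((fderiv ℝ f (x.1, x.2, h x)).comp j)
          = (InnerProductSpace.toDual ℝ H3).symm 0)
    exact h3
  have hxhU : ∀ x ∈ W, ((x.1, x.2, h x) : H1 × H2 × H3) ∈ U := by
    intro x hx
    have := hmV _ (hxhV x hx)
    rwa [hmapp] at this
  -- conclusion 3 : the partial derivative vanishes along the graph of h
  have hconc3 : ∀ x ∈ W, fderiv ℝ (fun y : H3 => f (x.1, x.2, y)) (h x) = 0 := by
    intro x hx
    rw [(lemA x.1 x.2 (h x) (hxhU x hx)).fderiv]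
    exact hD3zero x hx
  -- smoothness of h
  have hhsm : ContDiffOn ℝ 1 h W := by
    have h1 : ContDiffOn ℝ 1 (fun x : H1 × H2 => ψ (x, (0 : H3))) W := by
      apply hψu.comp ((contDiff_id.prodMk contDiff_const).contDiffOn)
      intro x hx
      exact (hrball _ (hmem_r x hx)).2
    exact contDiff_snd.comp_contDiffOn h1
  -- derivative of g
  set K : (H1 × H2) →L[ℝ] H1 × H2 × H3 :=
    (ContinuousLinearMap.fst ℝ H1 H2).prod
      ((ContinuousLinearMap.snd ℝ H1 H2).prod (0 : (H1 × H2) →L[ℝ] H3)) with hKdef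
  have hB : ∀ x ∈ W, HasFDerivAt (fun x' : H1 × H2 => f (x'.1, x'.2, h x'))
      ((fderiv ℝ f (x.1, x.2, h x)).comp K) x := by
    intro x hx
    have hhx : DifferentiableAt ℝ h x :=
      (hhsm.differentiableOn one_ne_zero).differentiableAt (hWopen.mem_nhds hx)
    set Dh : (H1 × H2) →L[ℝ] H3 := fderiv ℝ h x with hDhdef
    have hinner : HasFDerivAt (fun x' : H1 × H2 => ((x'.1, x'.2, h x') : H1 × H2 × H3))
        ((ContinuousLinearMap.fst ℝ H1 H2).prod
          ((ContinuousLinearMap.snd ℝ H1 H2).prod Dh)) x :=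
      HasFDerivAt.prodMk (hasFDerivAt_fst) (HasFDerivAt.prodMk (hasFDerivAt_snd) hhx.hasFDerivAt)
    have hcomp := (hfd _ (hxhU x hx)).hasFDerivAt.comp x hinner
    have hkey : (fderiv ℝ f (x.1, x.2, h x)).comp
        ((ContinuousLinearMap.fst ℝ H1 H2).prod
          ((ContinuousLinearMap.snd ℝ H1 H2).prod Dh))
        = (fderiv ℝ f (x.1, x.2, h x)).comp K := by
      apply ContinuousLinearMap.ext
      intro w
      show fderiv ℝ f (x.1, x.2, h x) (w.1, w.2, Dh w)
        = fderiv ℝ f (x.1, x.2, h x) (K w)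
      have hsplit : ((w.1, w.2, Dh w) : H1 × H2 × H3) = (w.1, w.2, 0) + (0, 0, Dh w) := by
        simp [Prod.ext_iff]
      rw [hsplit, map_add]
      have hz : fderiv ℝ f (x.1, x.2, h x) ((0 : H1), (0 : H2), Dh w)
          = ((fderiv ℝ f (x.1, x.2, h x)).comp j) (Dh w) := rfl
      rw [hz, hD3zero x hx]
      show fderiv ℝ f (x.1, x.2, h x) ((w.1, w.2, 0) : H1 × H2 × H3) + 0
        = fderiv ℝ f (x.1, x.2, h x) (K w)
      rw [add_zero]
      rfl
    rw [hkey] at hcomp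
    exact hcomp
  -- the frozen-third-variable derivative
  have hfrozen : ∀ x ∈ W, fderiv ℝ (fun x' : H1 × H2 => f (x'.1, x'.2, h x)) x
      = (fderiv ℝ f (x.1, x.2, h x)).comp K := by
    intro x hx
    have hinner : HasFDerivAt (fun x' : H1 × H2 => ((x'.1, x'.2, h x) : H1 × H2 × H3)) K x :=
      HasFDerivAt.prodMk (hasFDerivAt_fst) (HasFDerivAt.prodMk (hasFDerivAt_snd) (hasFDerivAt_const (h x) x))
    exact ((hfd _ (hxhU x hx)).hasFDerivAt.comp x hinner).fderiv
  -- conclusion 5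
  have hconc5 : ∀ x ∈ W, fderiv ℝ (fun x' : H1 × H2 => f (x'.1, x'.2, h x')) x
      = fderiv ℝ (fun x' : H1 × H2 => f (x'.1, x'.2, h x)) x := by
    intro x hx
    rw [(hB x hx).fderiv, hfrozen x hx]
  -- conclusion 4 : g is C²
  have hgC2 : ContDiffOn ℝ 2 (fun x : H1 × H2 => f (x.1, x.2, h x)) W := by
    have h2eq : (2 : WithTop ℕ∞) = 1 + 1 := by norm_num
    rw [h2eq, contDiffOn_succ_iff_fderiv_of_isOpen hWopen]
    refine ⟨fun x hx => (hB x hx).differentiableAt.differentiableWithinAt, ?_, ?_⟩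
    · intro hcon
      exact absurd hcon (by simp)
    · have h1 : ContDiffOn ℝ 1 (fun x : H1 × H2 => ((x.1, x.2, h x) : H1 × H2 × H3)) W :=
        (contDiff_fst.contDiffOn).prodMk ((contDiff_snd.contDiffOn).prodMk hhsm)
      have h2 : ContDiffOn ℝ 1 (fun x : H1 × H2 => fderiv ℝ f (x.1, x.2, h x)) W :=
        hdf1.comp h1 (fun x hx => hxhU x hx)
      have h3 : ContDiffOn ℝ 1
          (fun x : H1 × H2 => (fderiv ℝ f (x.1, x.2, h x)).comp K) W :=
        ((ContinuousLinearMap.compL ℝ (H1 × H2) (H1 × H2 × H3) ℝ).flip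
          K).contDiff.comp_contDiffOn h2
      exact h3.congr (fun x hx => (hB x hx).fderiv)
  -- assemble
  refine ⟨δ, hδ0, hδε, h, ?_, ?_, ?_, ?_, ?_⟩
  · show (ψ (((0 : H1), (0 : H2)), (0 : H3))).2 = 0
    rw [show ((((0 : H1), (0 : H2)), (0 : H3)) : (H1 × H2) × H3) = a0 from rfl, hψa]
  · rw [hWball]; exact hhsm
  · rw [hWball]; exact hconc3
  · rw [hWball]; exact hgC2
  · rw [hWball]; exact hconc5
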